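/- For every density operator ρ in the spin-s representation, writing v_k = Var_ρ(L_k) for k = 1,2,3, one has v₁v₂ + v₂v₃ + v₃v₁ ≥ (1/4)(s(s+1) − (v₁ + v₂ + v₃)). -/

import Mathlib

open Matrix Complex
open scoped ComplexOrder

noncomputable section

/-- spin value s = j/2 -/
def sVal (j : ℕ) : ℝ := (j : ℝ) / 2

/-- m-value of the k-th basis vector: m = k - s -/
def mVal (j : ℕ) (k : Fin (j + 1)) : ℝ := (k : ℝ) - sVal j

/-- L₃ -/
def L3 (j : ℕ) : Matrix (Fin (j + 1)) (Fin (j + 1)) ℂ :=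
  Matrix.diagonal (fun k => (mVal j k : ℂ))

/-- raising operator L₊ -/
def Lp (j : ℕ) : Matrix (Fin (j + 1)) (Fin (j + 1)) ℂ :=
  Matrix.of fun i k =>
    if (i : ℕ) = (k : ℕ) + 1 then
      ((Real.sqrt (sVal j * (sVal j + 1) - mVal j k * (mVal j k + 1)) : ℝ) : ℂ)
    else 0

/-- lowering operator L₋ -/
def Lm (j : ℕ) : Matrix (Fin (j + 1)) (Fin (j + 1)) ℂ :=
  Matrix.of fun i k =>
    if (i : ℕ) + 1 = (k : ℕ) then
      ((Real.sqrt (sVal j * (sVal j + 1) - mVal j k * (mVal j k - 1)) : ℝ) : ℂ)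
    else 0

/-- L₁ = (L₊ + L₋)/2 -/
def L1 (j : ℕ) : Matrix (Fin (j + 1)) (Fin (j + 1)) ℂ := (1 / 2 : ℂ) • (Lp j + Lm j)

/-- L₂ = (L₊ − L₋)/(2i) -/
def L2 (j : ℕ) : Matrix (Fin (j + 1)) (Fin (j + 1)) ℂ :=
  (1 / (2 * Complex.I)) • (Lp j - Lm j)

/-- density operator -/
def IsDensity {j : ℕ} (ρ : Matrix (Fin (j + 1)) (Fin (j + 1)) ℂ) : Prop :=
  ρ.PosSemidef ∧ ρ.trace = 1

/-- expectation value -/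
def expVal {j : ℕ} (ρ A : Matrix (Fin (j + 1)) (Fin (j + 1)) ℂ) : ℝ :=
  ((ρ * A).trace).re

/-- variance -/
def Var {j : ℕ} (ρ A : Matrix (Fin (j + 1)) (Fin (j + 1)) ℂ) : ℝ :=
  ((ρ * A ^ 2).trace).re - (((ρ * A).trace).re) ^ 2

/-- angular momentum component along a direction e ∈ ℝ³ -/
def dirL (j : ℕ) (e : Fin 3 → ℝ) : Matrix (Fin (j + 1)) (Fin (j + 1)) ℂ :=
  (e 0 : ℂ) • L1 j + (e 1 : ℂ) • L2 j + (e 2 : ℂ) • L3 j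


lemma g_nonneg (j : ℕ) (i : Fin (j+1)) :
    0 ≤ sVal j * (sVal j + 1) - mVal j i * (mVal j i - 1) := by
  have h1 : (i:ℝ) ≤ j := by exact_mod_cast Nat.le_of_lt_succ i.isLt
  have h0 : (0:ℝ) ≤ (i:ℝ) := Nat.cast_nonneg _
  simp only [mVal, sVal]
  nlinarith [mul_nonneg (by linarith : (0:ℝ) ≤ (j:ℝ) - (i:ℝ) + 1) h0]

lemma f_nonneg (j : ℕ) (i : Fin (j+1)) :
    0 ≤ sVal j * (sVal j + 1) - mVal j i * (mVal j i + 1) := by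
  have h1 : (i:ℝ) ≤ j := by exact_mod_cast Nat.le_of_lt_succ i.isLt
  have h0 : (0:ℝ) ≤ (i:ℝ) := Nat.cast_nonneg _
  simp only [mVal, sVal]
  nlinarith [mul_nonneg (by linarith : (0:ℝ) ≤ (j:ℝ) - (i:ℝ)) (by linarith : (0:ℝ) ≤ (i:ℝ) + 1)]

lemma Lp_mul_Lm (j : ℕ) : Lp j * Lm j =
    Matrix.diagonal (fun k => ((sVal j * (sVal j + 1) - mVal j k * (mVal j k - 1) : ℝ) : ℂ)) := by
  ext i l
  rw [Matrix.mul_apply]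
  simp only [Lp, Lm, Matrix.of_apply, Matrix.diagonal_apply]
  by_cases hil : i = l
  · subst hil
    rw [if_pos rfl]
    rcases Nat.eq_zero_or_pos (i:ℕ) with h0 | hpos
    · rw [Finset.sum_eq_zero]
      · have : mVal j i = -(sVal j) := by
          simp only [mVal]; rw [h0]; push_cast; ring
        rw [this]; norm_cast; ring
      · intro k _
        rw [if_neg (by omega), zero_mul]
    · have hlt : (i:ℕ) - 1 < j + 1 := by omega
      rw [Finset.sum_eq_single (⟨(i:ℕ)-1, hlt⟩ : Fin (j+1))]
      · have c1 : (i:ℕ) = ((⟨(i:ℕ)-1, hlt⟩ : Fin (j+1)) : ℕ) + 1 := by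
          simp only [Fin.val_mk]; omega
        have c2 : ((⟨(i:ℕ)-1, hlt⟩ : Fin (j+1)) : ℕ) + 1 = (i:ℕ) := by
          simp only [Fin.val_mk]; omega
        rw [if_pos c1, if_pos c2]
        have hm : mVal j (⟨(i:ℕ)-1, hlt⟩ : Fin (j+1)) = mVal j i - 1 := by
          simp only [mVal, Fin.val_mk]
          have : ((((i:ℕ) - 1 : ℕ)) : ℝ) = (i:ℕ) - 1 := by
            push_cast [Nat.cast_sub (by omega : 1 ≤ (i:ℕ))]; ring
          rw [this]; ring
        rw [hm, ← Complex.ofReal_mul]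
        congr 1
        rw [show mVal j i - 1 + 1 = mVal j i by ring,
          show sVal j * (sVal j + 1) - (mVal j i - 1) * mVal j i
            = sVal j * (sVal j + 1) - mVal j i * (mVal j i - 1) by ring]
        exact Real.mul_self_sqrt (g_nonneg j i)
      · intro k _ hk
        rw [if_neg, zero_mul]
        intro h
        exact hk (by apply Fin.ext; simp only [Fin.val_mk]; omega)
      · intro h; exact absurd (Finset.mem_univ _) h
  · rw [Finset.sum_eq_zero, if_neg hil]
    intro k _
    by_cases h1 : (i:ℕ) = (k:ℕ) + 1
    · rw [if_neg (show ¬((k:ℕ) + 1 = (l:ℕ)) from fun h2 => hil (Fin.ext (by omega))), mul_zero]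
    · rw [if_neg h1, zero_mul]

lemma Lm_mul_Lp (j : ℕ) : Lm j * Lp j =
    Matrix.diagonal (fun k => ((sVal j * (sVal j + 1) - mVal j k * (mVal j k + 1) : ℝ) : ℂ)) := by
  ext i l
  rw [Matrix.mul_apply]
  simp only [Lp, Lm, Matrix.of_apply, Matrix.diagonal_apply]
  by_cases hil : i = l
  · subst hil
    rw [if_pos rfl]
    rcases Nat.lt_or_ge (i:ℕ) j with hpos | htop
    · have hlt : (i:ℕ) + 1 < j + 1 := by omega
      rw [Finset.sum_eq_single (⟨(i:ℕ)+1, hlt⟩ : Fin (j+1))]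
      · have c1 : (i:ℕ) + 1 = ((⟨(i:ℕ)+1, hlt⟩ : Fin (j+1)) : ℕ) := by
          simp only [Fin.val_mk]
        have c2 : ((⟨(i:ℕ)+1, hlt⟩ : Fin (j+1)) : ℕ) = (i:ℕ) + 1 := by
          simp only [Fin.val_mk]
        rw [if_pos c1, if_pos c2]
        have hm : mVal j (⟨(i:ℕ)+1, hlt⟩ : Fin (j+1)) = mVal j i + 1 := by
          simp only [mVal, Fin.val_mk]; push_cast; ring
        rw [hm, ← Complex.ofReal_mul]
        congr 1
        rw [show mVal j i + 1 - 1 = mVal j i by ring,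
          show sVal j * (sVal j + 1) - (mVal j i + 1) * mVal j i
            = sVal j * (sVal j + 1) - mVal j i * (mVal j i + 1) by ring]
        exact Real.mul_self_sqrt (f_nonneg j i)
      · intro k _ hk
        rw [if_neg, zero_mul]
        intro h
        exact hk (by apply Fin.ext; simp only [Fin.val_mk]; omega)
      · intro h; exact absurd (Finset.mem_univ _) h
    · have htop' : (i:ℕ) = j := by omega
      rw [Finset.sum_eq_zero]
      · have : mVal j i = sVal j := by
          simp only [mVal, sVal]; rw [htop']; push_cast; ring
        rw [this]; norm_cast; ring
      · intro k _
        rw [if_neg (by omega), zero_mul]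
  · rw [Finset.sum_eq_zero, if_neg hil]
    intro k _
    by_cases h1 : (i:ℕ) + 1 = (k:ℕ)
    · rw [if_neg (show ¬((k:ℕ) = (l:ℕ) + 1) from fun h2 => hil (Fin.ext (by omega))), mul_zero]
    · rw [if_neg h1, zero_mul]

lemma L3_comm_Lp (j : ℕ) : L3 j * Lp j - Lp j * L3 j = Lp j := by
  ext i k
  simp only [Matrix.sub_apply, L3, Matrix.diagonal_mul, Matrix.mul_diagonal, Lp, Matrix.of_apply]
  by_cases h : (i:ℕ) = (k:ℕ) + 1
  · rw [if_pos h]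
    have : mVal j i = mVal j k + 1 := by
      simp only [mVal]; rw [show ((i:ℕ):ℝ) = ((k:ℕ):ℝ) + 1 by exact_mod_cast congrArg Nat.cast h]
      ring
    rw [this]; push_cast; ring
  · rw [if_neg h]; ring

lemma L3_comm_Lm (j : ℕ) : L3 j * Lm j - Lm j * L3 j = -Lm j := by
  ext i k
  simp only [Matrix.sub_apply, Matrix.neg_apply, L3, Matrix.diagonal_mul, Matrix.mul_diagonal,
    Lm, Matrix.of_apply]
  by_cases h : (i:ℕ) + 1 = (k:ℕ)
  · rw [if_pos h]
    have : mVal j i = mVal j k - 1 := by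
      simp only [mVal]
      have h' : ((i:ℕ):ℝ) + 1 = ((k:ℕ):ℝ) := by exact_mod_cast congrArg Nat.cast h
      linarith
    rw [this]; push_cast; ring
  · rw [if_neg h]; ring

lemma PM_sub_MP (j : ℕ) : Lp j * Lm j - Lm j * Lp j = (2:ℂ) • L3 j := by
  rw [Lp_mul_Lm, Lm_mul_Lp, L3]
  ext i k
  by_cases h : i = k
  · subst h
    simp only [Matrix.sub_apply, Matrix.smul_apply, Matrix.diagonal_apply_eq, smul_eq_mul]
    push_cast; ring
  · simp only [Matrix.sub_apply, Matrix.smul_apply, Matrix.diagonal_apply_ne _ h, smul_eq_mul,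
      sub_zero, mul_zero]

lemma PM_add_MP (j : ℕ) : Lp j * Lm j + Lm j * Lp j
    = (2:ℂ) • (((sVal j * (sVal j + 1) : ℝ) : ℂ) • 1 - L3 j ^ 2) := by
  rw [Lp_mul_Lm, Lm_mul_Lp, L3, pow_two, Matrix.diagonal_mul_diagonal]
  ext i k
  by_cases h : i = k
  · subst h
    simp only [Matrix.add_apply, Matrix.smul_apply, Matrix.sub_apply, Matrix.diagonal_apply_eq,
      Matrix.one_apply_eq, smul_eq_mul]
    push_cast; ring
  · simp only [Matrix.add_apply, Matrix.smul_apply, Matrix.sub_apply,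
      Matrix.diagonal_apply_ne _ h, Matrix.one_apply_ne h, smul_eq_mul, add_zero, mul_zero,
      sub_zero, smul_zero, zero_add, zero_sub, mul_neg, neg_zero, sub_self]

lemma Lp_conjT (j : ℕ) : (Lp j)ᴴ = Lm j := by
  ext i k
  simp only [Matrix.conjTranspose_apply, Lp, Lm, Matrix.of_apply]
  by_cases h : (i:ℕ) + 1 = (k:ℕ)
  · rw [if_pos h.symm, if_pos h, RCLike.star_def, Complex.conj_ofReal]
    congr 1
    have hm : mVal j k = mVal j i + 1 := by
      simp only [mVal]
      have h' : ((i:ℕ):ℝ) + 1 = ((k:ℕ):ℝ) := by exact_mod_cast congrArg Nat.cast h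
      linarith
    rw [hm]; ring_nf
  · rw [if_neg (fun hh => h hh.symm), if_neg h, star_zero]

lemma Lm_conjT (j : ℕ) : (Lm j)ᴴ = Lp j := by
  rw [← Lp_conjT, Matrix.conjTranspose_conjTranspose]

lemma L3_herm (j : ℕ) : (L3 j).IsHermitian := by
  unfold Matrix.IsHermitian
  ext i k
  simp only [Matrix.conjTranspose_apply, L3]
  by_cases h : i = k
  · subst h; simp [Matrix.diagonal_apply_eq, RCLike.star_def, Complex.conj_ofReal]
  · rw [Matrix.diagonal_apply_ne _ (fun hh => h hh.symm), Matrix.diagonal_apply_ne _ h, star_zero]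

lemma L1_herm (j : ℕ) : (L1 j).IsHermitian := by
  unfold Matrix.IsHermitian
  rw [L1, Matrix.conjTranspose_smul, Matrix.conjTranspose_add, Lp_conjT, Lm_conjT]
  rw [show (star (1/2 : ℂ)) = (1/2 : ℂ) by simp]
  rw [add_comm (Lm j) (Lp j)]

lemma L2_herm (j : ℕ) : (L2 j).IsHermitian := by
  unfold Matrix.IsHermitian
  rw [L2, Matrix.conjTranspose_smul, Matrix.conjTranspose_sub, Lp_conjT, Lm_conjT]
  rw [show (star (1/(2*Complex.I) : ℂ)) = -(1/(2*Complex.I) : ℂ) by simp [Complex.ext_iff]]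
  rw [neg_smul, ← smul_neg, neg_sub]

lemma MP_sub_PM (j : ℕ) : Lm j * Lp j - Lp j * Lm j = (-2 : ℂ) • L3 j := by
  rw [← neg_sub, PM_sub_MP]; module

lemma comm12 (j : ℕ) : L1 j * L2 j - L2 j * L1 j = Complex.I • L3 j := by
  have key : L1 j * L2 j - L2 j * L1 j
      = ((1/2 : ℂ) * (1/(2*Complex.I))) •
        ((Lm j * Lp j - Lp j * Lm j) + (Lm j * Lp j - Lp j * Lm j)) := by
    simp only [L1, L2, smul_mul_assoc, mul_smul_comm, smul_smul, mul_add, add_mul, mul_sub,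
      sub_mul]
    module
  rw [key, MP_sub_PM]
  match_scalars
  all_goals field_simp
  all_goals first
    | ring1
    | linear_combination (-4 : ℂ) * Complex.I_sq
    | linear_combination (-2 : ℂ) * Complex.I_sq
    | linear_combination (-1 : ℂ) * Complex.I_sq
    | linear_combination Complex.I_sq
    | linear_combination (2 : ℂ) * Complex.I_sq
    | linear_combination (4 : ℂ) * Complex.I_sq
    | linear_combination (1/2 : ℂ) * mul_inv_cancel₀ Complex.I_ne_zero
    | linear_combination (1/2 : ℂ) * mul_inv_cancel₀ Complex.I_ne_zero + Complex.I_sq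
    | linear_combination (1/2 : ℂ) * mul_inv_cancel₀ Complex.I_ne_zero - Complex.I_sq

lemma comm23 (j : ℕ) : L2 j * L3 j - L3 j * L2 j = Complex.I • L1 j := by
  have key : L2 j * L3 j - L3 j * L2 j
      = (1/(2*Complex.I) : ℂ) •
        ((Lp j * L3 j - L3 j * Lp j) - (Lm j * L3 j - L3 j * Lm j)) := by
    simp only [L2, smul_mul_assoc, mul_smul_comm, sub_mul, mul_sub]
    module
  have hP : Lp j * L3 j - L3 j * Lp j = -Lp j := by
    rw [← neg_sub, L3_comm_Lp]
  have hM : Lm j * L3 j - L3 j * Lm j = Lm j := by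
    rw [← neg_sub, L3_comm_Lm]; module
  rw [key, hP, hM, L1]
  match_scalars
  all_goals field_simp
  all_goals first
    | ring1
    | linear_combination (-4 : ℂ) * Complex.I_sq
    | linear_combination (-2 : ℂ) * Complex.I_sq
    | linear_combination (-1 : ℂ) * Complex.I_sq
    | linear_combination Complex.I_sq
    | linear_combination (2 : ℂ) * Complex.I_sq
    | linear_combination (4 : ℂ) * Complex.I_sq
    | linear_combination (1/2 : ℂ) * mul_inv_cancel₀ Complex.I_ne_zero
    | linear_combination (1/2 : ℂ) * mul_inv_cancel₀ Complex.I_ne_zero + Complex.I_sq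
    | linear_combination (1/2 : ℂ) * mul_inv_cancel₀ Complex.I_ne_zero - Complex.I_sq

lemma comm31 (j : ℕ) : L3 j * L1 j - L1 j * L3 j = Complex.I • L2 j := by
  have key : L3 j * L1 j - L1 j * L3 j
      = (1/2 : ℂ) • ((L3 j * Lp j - Lp j * L3 j) + (L3 j * Lm j - Lm j * L3 j)) := by
    simp only [L1, smul_mul_assoc, mul_smul_comm, add_mul, mul_add]
    module
  rw [key, L3_comm_Lp, L3_comm_Lm, L2]
  match_scalars
  all_goals field_simp
  all_goals first
    | ring1
    | linear_combination (-4 : ℂ) * Complex.I_sq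
    | linear_combination (-2 : ℂ) * Complex.I_sq
    | linear_combination (-1 : ℂ) * Complex.I_sq
    | linear_combination Complex.I_sq
    | linear_combination (2 : ℂ) * Complex.I_sq
    | linear_combination (4 : ℂ) * Complex.I_sq
    | linear_combination (1/2 : ℂ) * mul_inv_cancel₀ Complex.I_ne_zero
    | linear_combination (1/2 : ℂ) * mul_inv_cancel₀ Complex.I_ne_zero + Complex.I_sq
    | linear_combination (1/2 : ℂ) * mul_inv_cancel₀ Complex.I_ne_zero - Complex.I_sq

lemma casimir (j : ℕ) : L1 j ^ 2 + L2 j ^ 2 + L3 j ^ 2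
    = ((sVal j * (sVal j + 1) : ℝ) : ℂ) • (1 : Matrix (Fin (j+1)) (Fin (j+1)) ℂ) := by
  have key : L1 j ^ 2 + L2 j ^ 2
      = ((1/2 : ℂ) * (1/2)) • ((Lp j * Lm j + Lm j * Lp j) + (Lp j * Lm j + Lm j * Lp j))
        + (((1/(2*Complex.I)) * (1/(2*Complex.I)) + (1/2) * (1/2)) : ℂ) •
          ((Lp j * Lp j + Lm j * Lm j) - (Lp j * Lm j + Lm j * Lp j)) := by
    simp only [pow_two, L1, L2, smul_mul_assoc, mul_smul_comm, smul_smul, mul_add, add_mul,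
      mul_sub, sub_mul]
    module
  have hz : ((1/(2*Complex.I)) * (1/(2*Complex.I)) + (1/2) * (1/2) : ℂ) = 0 := by
    field_simp
    linear_combination Complex.I_sq
  rw [key, hz, zero_smul, add_zero, PM_add_MP]
  match_scalars
  · ring
  · norm_num

lemma trace_real {n : ℕ} {ρ A : Matrix (Fin n) (Fin n) ℂ}
    (hρ : ρ.IsHermitian) (hA : A.IsHermitian) :
    (ρ * A).trace = (((ρ * A).trace).re : ℂ) := by
  have h : (starRingEnd ℂ) ((ρ * A).trace) = (ρ * A).trace := by
    have : ((ρ * A)ᴴ).trace = star ((ρ * A).trace) := Matrix.trace_conjTranspose _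
    rw [Matrix.conjTranspose_mul, hρ.eq, hA.eq, Matrix.trace_mul_comm] at this
    exact this.symm
  exact (Complex.conj_eq_iff_re.mp h).symm

def matE {n : ℕ} (U : Matrix (Fin n) (Fin n) ℂ) : EuclideanSpace ℂ (Fin n × Fin n) :=
  WithLp.toLp 2 (fun p : Fin n × Fin n => U p.1 p.2)

lemma cs_trace {n : ℕ} (X Y : Matrix (Fin n) (Fin n) ℂ) :
    ‖(Xᴴ * Y).trace‖ ^ 2 ≤ ((Xᴴ * X).trace).re * ((Yᴴ * Y).trace).re := by
  set f := matE X with hf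
  set g := matE Y with hg
  have hinner : ∀ U V : Matrix (Fin n) (Fin n) ℂ,
      (inner ℂ (matE U) (matE V) : ℂ) = (Uᴴ * V).trace := by
    intro U V
    simp only [PiLp.inner_apply, RCLike.inner_apply, matE, PiLp.toLp_apply, Matrix.trace, Matrix.diag,
      Matrix.mul_apply, Matrix.conjTranspose_apply, RCLike.star_def,
      Fintype.sum_prod_type]
    rw [Finset.sum_comm]
    simp only [mul_comm]
  have h1 : ‖(inner ℂ f g : ℂ)‖ ≤ ‖f‖ * ‖g‖ := norm_inner_le_norm f g
  have h2 : (RCLike.re (inner ℂ f f : ℂ) : ℝ) = ‖f‖ ^ 2 := inner_self_eq_norm_sq f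
  have h3 : (RCLike.re (inner ℂ g g : ℂ) : ℝ) = ‖g‖ ^ 2 := inner_self_eq_norm_sq g
  have hfg : (inner ℂ f g : ℂ) = (Xᴴ * Y).trace := hinner X Y
  have hff : (inner ℂ f f : ℂ) = (Xᴴ * X).trace := hinner X X
  have hgg : (inner ℂ g g : ℂ) = (Yᴴ * Y).trace := hinner Y Y
  rw [hfg] at h1
  rw [hff] at h2
  rw [hgg] at h3
  have : ‖(Xᴴ * Y).trace‖ = ‖(Xᴴ * Y).trace‖ := rfl
  rw [this]
  calc ‖(Xᴴ * Y).trace‖ ^ 2 ≤ (‖f‖ * ‖g‖) ^ 2 := by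
        apply pow_le_pow_left₀ (norm_nonneg _) h1
    _ = ‖f‖^2 * ‖g‖^2 := by ring
    _ = ((Xᴴ * X).trace).re * ((Yᴴ * Y).trace).re := by rw [← h2, ← h3]; rfl

lemma robertson {j : ℕ} (ρ A B C : Matrix (Fin (j+1)) (Fin (j+1)) ℂ)
    (hρ : ρ.PosSemidef) (ht : ρ.trace = 1)
    (hA : A.IsHermitian) (hB : B.IsHermitian) (hC : C.IsHermitian)
    (hcomm : A * B - B * A = Complex.I • C) :
    Var ρ A * Var ρ B ≥ (1/4) * (expVal ρ C)^2 := by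
  set a : ℝ := expVal ρ A with ha
  set b : ℝ := expVal ρ B with hb
  set c : ℝ := expVal ρ C with hc
  set A' : Matrix (Fin (j+1)) (Fin (j+1)) ℂ := A - (a : ℂ) • 1 with hA'def
  set B' : Matrix (Fin (j+1)) (Fin (j+1)) ℂ := B - (b : ℂ) • 1 with hB'def
  have hρh : ρ.IsHermitian := hρ.1
  have htrA : (ρ * A).trace = (a : ℂ) := trace_real hρh hA
  have htrB : (ρ * B).trace = (b : ℂ) := trace_real hρh hB
  have htrC : (ρ * C).trace = (c : ℂ) := trace_real hρh hC
  have hA'h : A'ᴴ = A' := by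
    rw [hA'def, Matrix.conjTranspose_sub, hA.eq, Matrix.conjTranspose_smul,
      Matrix.conjTranspose_one, RCLike.star_def, Complex.conj_ofReal]
  have hB'h : B'ᴴ = B' := by
    rw [hB'def, Matrix.conjTranspose_sub, hB.eq, Matrix.conjTranspose_smul,
      Matrix.conjTranspose_one, RCLike.star_def, Complex.conj_ofReal]
  -- variance identities
  have hvar : ∀ (M : Matrix (Fin (j+1)) (Fin (j+1)) ℂ) (m : ℝ),
      (ρ * M).trace = (m : ℂ) →
      (ρ * ((M - (m:ℂ) • 1) * (M - (m:ℂ) • 1))).trace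
        = (ρ * M ^ 2).trace - ((m : ℂ))^2 := by
    intro M m hm
    have expand : (M - (m:ℂ) • 1) * (M - (m:ℂ) • 1)
        = M ^ 2 - (2 * m : ℂ) • M + ((m:ℂ)^2) • 1 := by
      simp only [pow_two, sub_mul, mul_sub, smul_mul_assoc, mul_smul_comm, smul_smul,
        mul_one, one_mul]
      module
    rw [expand]
    rw [mul_add, mul_sub, Matrix.trace_add, Matrix.trace_sub, Matrix.mul_smul,
      Matrix.mul_smul, Matrix.trace_smul, Matrix.trace_smul, Matrix.mul_one, hm, ht]
    simp only [smul_eq_mul]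
    push_cast
    ring
  have hvarA : ((ρ * (A' * A')).trace).re = Var ρ A := by
    rw [hA'def, hvar A a htrA]
    simp only [Var, Complex.sub_re, ← ha]
    norm_cast
  have hvarB : ((ρ * (B' * B')).trace).re = Var ρ B := by
    rw [hB'def, hvar B b htrB]
    simp only [Var, Complex.sub_re, ← hb]
    norm_cast
  -- Cauchy-Schwarz
  obtain ⟨S, hSmul, hSh⟩ : ∃ S : Matrix (Fin (j+1)) (Fin (j+1)) ℂ, S * S = ρ ∧ Sᴴ = S := by
    open scoped MatrixOrder in
    exact ⟨CFC.sqrt ρ, CFC.sqrt_mul_sqrt_self ρ hρ.nonneg, (CFC.sqrt_nonneg ρ).posSemidef.1.eq⟩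
  set X := A' * S with hX
  set Y := B' * S with hY
  have hXY : (Xᴴ * Y).trace = (ρ * (A' * B')).trace := by
    rw [hX, hY, Matrix.conjTranspose_mul, hSh, hA'h]
    rw [show S * A' * (B' * S) = S * (A' * B' * S) by noncomm_ring]
    rw [Matrix.trace_mul_comm, Matrix.mul_assoc, hSmul, Matrix.trace_mul_comm]
  have hXX : (Xᴴ * X).trace = (ρ * (A' * A')).trace := by
    rw [hX, Matrix.conjTranspose_mul, hSh, hA'h]
    rw [show S * A' * (A' * S) = S * (A' * A' * S) by noncomm_ring]
    rw [Matrix.trace_mul_comm, Matrix.mul_assoc, hSmul, Matrix.trace_mul_comm]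
  have hYY : (Yᴴ * Y).trace = (ρ * (B' * B')).trace := by
    rw [hY, Matrix.conjTranspose_mul, hSh, hB'h]
    rw [show S * B' * (B' * S) = S * (B' * B' * S) by noncomm_ring]
    rw [Matrix.trace_mul_comm, Matrix.mul_assoc, hSmul, Matrix.trace_mul_comm]
  have hcs := cs_trace X Y
  rw [hXY, hXX, hYY] at hcs
  set z := (ρ * (A' * B')).trace with hz
  -- imaginary part of z
  have hconj : (starRingEnd ℂ) z = (ρ * (B' * A')).trace := by
    have h1 : ((ρ * (A' * B'))ᴴ).trace = star ((ρ * (A' * B')).trace) :=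
      Matrix.trace_conjTranspose _
    rw [Matrix.conjTranspose_mul, Matrix.conjTranspose_mul, hρh.eq, hA'h, hB'h,
      RCLike.star_def] at h1
    rw [hz, ← h1, Matrix.trace_mul_comm]
  have hsub : z - (starRingEnd ℂ) z = Complex.I * (c : ℂ) := by
    rw [hconj, hz, ← Matrix.trace_sub, ← Matrix.mul_sub]
    have hAB' : A' * B' - B' * A' = Complex.I • C := by
      rw [hA'def, hB'def, ← hcomm]
      simp only [sub_mul, mul_sub, smul_mul_assoc, mul_smul_comm, smul_smul, mul_one, one_mul]
      module
    rw [hAB', Matrix.mul_smul, Matrix.trace_smul, htrC, smul_eq_mul]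
  have him : z.im = c / 2 := by
    have h2 := Complex.sub_conj z
    rw [hsub] at h2
    have h3 : ((2 * z.im : ℝ) : ℂ) * Complex.I = (c : ℂ) * Complex.I := by
      rw [← h2]; ring
    have h4 : ((2 * z.im : ℝ) : ℂ) = (c : ℂ) := mul_right_cancel₀ Complex.I_ne_zero h3
    have h5 : 2 * z.im = c := by exact_mod_cast h4
    linarith
  rw [hvarA, hvarB] at hcs
  have habs : |z.im| ≤ ‖z‖ := Complex.abs_im_le_norm z
  have h6 : (c/2)^2 ≤ ‖z‖ ^ 2 := by
    rw [← him, ← _root_.sq_abs z.im]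
    exact pow_le_pow_left₀ (abs_nonneg _) habs 2
  calc (1/4) * (expVal ρ C)^2 = (c/2)^2 := by rw [← hc]; ring
    _ ≤ ‖z‖ ^ 2 := h6
    _ ≤ Var ρ A * Var ρ B := hcs

/-- v₁v₂ + v₂v₃ + v₃v₁ ≥ (1/4)(s(s+1) − (v₁+v₂+v₃)). -/
theorem robertson_three_component_sum (j : ℕ) (hj : 0 < j)
    (ρ : Matrix (Fin (j + 1)) (Fin (j + 1)) ℂ) (hρ : IsDensity ρ) :
    Var ρ (L1 j) * Var ρ (L2 j) + Var ρ (L2 j) * Var ρ (L3 j) +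
        Var ρ (L3 j) * Var ρ (L1 j) ≥
      (1 / 4) * (sVal j * (sVal j + 1) -
        (Var ρ (L1 j) + Var ρ (L2 j) + Var ρ (L3 j))) := by
  obtain ⟨hpsd, htr⟩ := hρ
  have h12 := robertson ρ (L1 j) (L2 j) (L3 j) hpsd htr (L1_herm j) (L2_herm j) (L3_herm j)
    (comm12 j)
  have h23 := robertson ρ (L2 j) (L3 j) (L1 j) hpsd htr (L2_herm j) (L3_herm j) (L1_herm j)
    (comm23 j)
  have h31 := robertson ρ (L3 j) (L1 j) (L2 j) hpsd htr (L3_herm j) (L1_herm j) (L2_herm j)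
    (comm31 j)
  have hcas : (ρ * L1 j ^ 2).trace + (ρ * L2 j ^ 2).trace + (ρ * L3 j ^ 2).trace
      = ((sVal j * (sVal j + 1) : ℝ) : ℂ) := by
    rw [← Matrix.trace_add, ← Matrix.trace_add, ← Matrix.mul_add, ← Matrix.mul_add, casimir,
      Matrix.mul_smul, Matrix.mul_one, Matrix.trace_smul, htr, smul_eq_mul, mul_one]
  have hcasre : ((ρ * L1 j ^ 2).trace).re + ((ρ * L2 j ^ 2).trace).re
      + ((ρ * L3 j ^ 2).trace).re = sVal j * (sVal j + 1) := by
    have := congrArg Complex.re hcas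
    simpa [Complex.add_re] using this
  simp only [Var, expVal] at h12 h23 h31 ⊢
  nlinarith [h12, h23, h31, hcasre]
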